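/- A non-trivial level equation in canonical form has no unifier if and only if it (or its symmetric) has the form n ≐ l where n is a constant and n is strictly less than the constant coefficient of l. -/
import Mathlib


/-- Universe level expressions: `l ::= i | 0 | S l | l ⊔ l'`. -/
inductive Lvl : Type
  | var : ℕ → Lvl
  | zero : Lvl
  | succ : Lvl → Lvl
  | max : Lvl → Lvl → Lvl
  deriving DecidableEq

namespace Lvl

/-- Interpretation of a level under an assignment `φ` of naturals to variables. -/
def eval (φ : ℕ → ℕ) : Lvl → ℕ
  | .var i => φ i
  | .zero => 0
  | .succ l => l.eval φ + 1
  | .max a b => Nat.max (a.eval φ) (b.eval φ)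

/-- Semantic equivalence: equal value under every assignment. -/
def Equiv (l l' : Lvl) : Prop := ∀ φ : ℕ → ℕ, l.eval φ = l'.eval φ

/-- Application of a level substitution. -/
def subst (θ : ℕ → Lvl) : Lvl → Lvl
  | .var i => θ i
  | .zero => .zero
  | .succ l => .succ (l.subst θ)
  | .max a b => .max (a.subst θ) (b.subst θ)

/-- Free variables of a level. -/
def fv : Lvl → Finset ℕ
  | .var i => {i}
  | .zero => ∅
  | .succ l => l.fv
  | .max a b => a.fv ∪ b.fv

/-- The constant level `n`, i.e. `Sⁿ 0`. -/
def const (n : ℕ) : Lvl := Lvl.succ^[n] Lvl.zero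

/-- The level `n + i`, i.e. `Sⁿ i`. -/
def atom (n i : ℕ) : Lvl := Lvl.succ^[n] (Lvl.var i)

end Lvl

/-- `θ` is a unifier of the equation `l₁ ≐ l₂`. -/
def Unifies (θ : ℕ → Lvl) (l₁ l₂ : Lvl) : Prop := Lvl.Equiv (l₁.subst θ) (l₂.subst θ)

/-- `θ` is a most general unifier of the equation `l₁ ≐ l₂`. -/
def IsMGU (θ : ℕ → Lvl) (l₁ l₂ : Lvl) : Prop :=
  Unifies θ l₁ l₂ ∧ ∀ τ, Unifies τ l₁ l₂ →
    ∃ θ' : ℕ → Lvl, ∀ i ∈ l₁.fv ∪ l₂.fv, Lvl.Equiv ((θ i).subst θ') (τ i)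

/-- The level `p ⊔ (n₁ + i₁) ⊔ ... ⊔ (n_m + i_m)` given by canonical-form data. -/
def buildCanon (p : ℕ) (L : List (ℕ × ℕ)) : Lvl :=
  L.foldr (fun a acc => Lvl.max (Lvl.atom a.1 a.2) acc) (Lvl.const p)

/-- The equation `buildCanon p₁ L₁ ≐ buildCanon p₂ L₂` is in canonical form:
both sides canonical (coefficients bounded by the constant coefficient, variables
pairwise distinct), shared variables have equal coefficients on both sides, and
some coefficient on some side equals `0`. -/
def CanonEqn (p₁ : ℕ) (L₁ : List (ℕ × ℕ)) (p₂ : ℕ) (L₂ : List (ℕ × ℕ)) : Prop :=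
  (∀ a ∈ L₁, a.1 ≤ p₁) ∧ (L₁.map Prod.snd).Nodup ∧
  (∀ a ∈ L₂, a.1 ≤ p₂) ∧ (L₂.map Prod.snd).Nodup ∧
  (∀ a ∈ L₁, ∀ b ∈ L₂, a.2 = b.2 → a.1 = b.1) ∧
  0 ∈ (p₁ :: p₂ :: (L₁ ++ L₂).map Prod.fst)

-- auxiliary lemmas

lemma eval_const (φ : ℕ → ℕ) (n : ℕ) : (Lvl.const n).eval φ = n := by
  induction n with
  | zero => rfl
  | succ n ih => simp only [Lvl.const, Function.iterate_succ_apply'] at ih ⊢; simp [Lvl.eval, ih]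

lemma subst_const (θ : ℕ → Lvl) (n : ℕ) : (Lvl.const n).subst θ = Lvl.const n := by
  induction n with
  | zero => rfl
  | succ n ih => simp only [Lvl.const, Function.iterate_succ_apply'] at ih ⊢; simp [Lvl.subst, ih]

lemma eval_subst_atom (θ : ℕ → Lvl) (φ : ℕ → ℕ) (n i : ℕ) :
    ((Lvl.atom n i).subst θ).eval φ = n + (θ i).eval φ := by
  induction n with
  | zero => simp [Lvl.atom, Lvl.subst]
  | succ n ih =>
      simp only [Lvl.atom, Function.iterate_succ_apply'] at ih ⊢
      simp [Lvl.subst, Lvl.eval, ih]; omega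

def valAux (ψ : ℕ → ℕ) (p : ℕ) (L : List (ℕ × ℕ)) : ℕ :=
  L.foldr (fun a m => Nat.max (a.1 + ψ a.2) m) p

lemma eval_subst_build (θ : ℕ → Lvl) (φ : ℕ → ℕ) (p : ℕ) (L : List (ℕ × ℕ)) :
    ((buildCanon p L).subst θ).eval φ = valAux (fun i => (θ i).eval φ) p L := by
  induction L with
  | nil => simp [buildCanon, valAux, subst_const, eval_const]
  | cons a L ih =>
      simp only [buildCanon, valAux, List.foldr_cons] at ih ⊢
      simp [Lvl.subst, Lvl.eval, eval_subst_atom, ih]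

lemma le_valAux (ψ : ℕ → ℕ) (p : ℕ) (L : List (ℕ × ℕ)) : p ≤ valAux ψ p L := by
  induction L with
  | nil => simp [valAux]
  | cons a L ih =>
      simp only [valAux, List.foldr_cons] at ih ⊢
      exact le_trans ih (Nat.le_max_right _ _)

lemma term_le_valAux (ψ : ℕ → ℕ) (p : ℕ) {L : List (ℕ × ℕ)} {a : ℕ × ℕ} (ha : a ∈ L) :
    a.1 + ψ a.2 ≤ valAux ψ p L := by
  induction L with
  | nil => simp at ha
  | cons b L ih =>
      simp only [valAux, List.foldr_cons] at ih ⊢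
      rcases List.mem_cons.mp ha with h | h
      · subst h; exact Nat.le_max_left _ _
      · exact le_trans (ih h) (Nat.le_max_right _ _)

lemma valAux_le {ψ : ℕ → ℕ} {p M : ℕ} {L : List (ℕ × ℕ)} (hp : p ≤ M)
    (h : ∀ a ∈ L, a.1 + ψ a.2 ≤ M) : valAux ψ p L ≤ M := by
  induction L with
  | nil => simpa [valAux]
  | cons a L ih =>
      simp only [valAux, List.foldr_cons] at ih ⊢
      exact Nat.max_le.mpr ⟨h a (by simp), ih (fun b hb => h b (by simp [hb]))⟩

lemma valAux_eq_M {ψ : ℕ → ℕ} {p M : ℕ} {L : List (ℕ × ℕ)} (hp : p ≤ M)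
    (hterm : ∀ a ∈ L, a.1 + ψ a.2 = M) (hnil : L = [] → p = M) :
    valAux ψ p L = M := by
  rcases eq_or_ne L [] with h | h
  · subst h; simpa [valAux] using hnil rfl
  · refine le_antisymm (valAux_le hp (fun a ha => le_of_eq (hterm a ha))) ?_
    obtain ⟨a, ha⟩ := List.exists_mem_of_ne_nil L h
    calc M = a.1 + ψ a.2 := (hterm a ha).symm
      _ ≤ _ := term_le_valAux _ p ha

def coeffOf (L : List (ℕ × ℕ)) (i : ℕ) : ℕ := ((L.find? (fun a => a.2 == i)).getD (0, 0)).1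

lemma coeffOf_eq {L : List (ℕ × ℕ)}
    (hsame : ∀ a ∈ L, ∀ b ∈ L, a.2 = b.2 → a.1 = b.1) {a : ℕ × ℕ} (ha : a ∈ L) :
    coeffOf L a.2 = a.1 := by
  have hex : (L.find? (fun b => b.2 == a.2)).isSome :=
    List.find?_isSome.mpr ⟨a, ha, by simp⟩
  obtain ⟨b, hb⟩ := Option.isSome_iff_exists.mp hex
  have hbmem := List.mem_of_find?_eq_some hb
  have hbp := List.find?_some hb
  simp only [beq_iff_eq] at hbp
  simp only [coeffOf, hb, Option.getD_some]
  exact hsame b hbmem a ha hbp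

lemma exists_unifier (p₁ p₂ : ℕ) (L₁ L₂ : List (ℕ × ℕ))
    (h1 : ∀ a ∈ L₁, a.1 ≤ p₁) (h3 : ∀ a ∈ L₂, a.1 ≤ p₂)
    (hsame : ∀ a ∈ L₁ ++ L₂, ∀ b ∈ L₁ ++ L₂, a.2 = b.2 → a.1 = b.1)
    (M : ℕ) (hM1 : p₁ ≤ M) (hM2 : p₂ ≤ M)
    (hE1 : L₁ = [] → p₁ = M) (hE2 : L₂ = [] → p₂ = M) :
    Unifies (fun i => Lvl.const (M - coeffOf (L₁ ++ L₂) i))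
      (buildCanon p₁ L₁) (buildCanon p₂ L₂) := by
  intro φ
  rw [eval_subst_build, eval_subst_build]
  have hψ : (fun i => (Lvl.const (M - coeffOf (L₁ ++ L₂) i)).eval φ)
      = fun i => M - coeffOf (L₁ ++ L₂) i := by
    funext i; exact eval_const φ _
  rw [hψ]
  have hterm : ∀ (p : ℕ) (L : List (ℕ × ℕ)), p ≤ M → (∀ a ∈ L, a.1 ≤ p) →
      (∀ a ∈ L, a ∈ L₁ ++ L₂) →
      ∀ a ∈ L, a.1 + (M - coeffOf (L₁ ++ L₂) a.2) = M := by
    intro p L hpM hLp hLmem a ha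
    have hc : coeffOf (L₁ ++ L₂) a.2 = a.1 := coeffOf_eq hsame (hLmem a ha)
    have hle : a.1 ≤ M := le_trans (hLp a ha) hpM
    rw [hc]; omega
  rw [valAux_eq_M hM1 (hterm p₁ L₁ hM1 h1 (fun a ha => List.mem_append.mpr (Or.inl ha))) hE1,
    valAux_eq_M hM2 (hterm p₂ L₂ hM2 h3 (fun a ha => List.mem_append.mpr (Or.inr ha))) hE2]

/-- A non-trivial level equation in canonical form has no unifier iff it (or its
symmetric) has the form `n ≐ l` where `n` is a constant (no variables on that
side) strictly smaller than the constant coefficient of `l`. -/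
theorem no_unifier_characterization (p₁ p₂ : ℕ) (L₁ L₂ : List (ℕ × ℕ))
    (hcanon : CanonEqn p₁ L₁ p₂ L₂)
    (hnontriv : ¬ Lvl.Equiv (buildCanon p₁ L₁) (buildCanon p₂ L₂)) :
    (¬ ∃ θ, Unifies θ (buildCanon p₁ L₁) (buildCanon p₂ L₂)) ↔
      ((L₁ = [] ∧ p₁ < p₂) ∨ (L₂ = [] ∧ p₂ < p₁)) := by
  obtain ⟨h1, h2, h3, h4, h5, _⟩ := hcanon
  have hsame : ∀ a ∈ L₁ ++ L₂, ∀ b ∈ L₁ ++ L₂, a.2 = b.2 → a.1 = b.1 := by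
    intro a ha b hb hab
    rcases List.mem_append.mp ha with ha' | ha' <;> rcases List.mem_append.mp hb with hb' | hb'
    · rw [List.inj_on_of_nodup_map h2 ha' hb' hab]
    · exact h5 a ha' b hb' hab
    · exact (h5 b hb' a ha' hab.symm).symm
    · rw [List.inj_on_of_nodup_map h4 ha' hb' hab]
  constructor
  · intro hno
    by_contra hshape
    push_neg at hshape
    obtain ⟨hs1, hs2⟩ := hshape
    apply hno
    rcases eq_or_ne L₁ [] with hL1 | hL1 <;> rcases eq_or_ne L₂ [] with hL2 | hL2
    · -- both empty: equation is trivial, contradiction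
      exfalso
      have ha := hs1 hL1
      have hb := hs2 hL2
      have hp12 : p₁ = p₂ := le_antisymm hb ha
      apply hnontriv
      intro φ
      subst hL1; subst hL2
      show (Lvl.const p₁).eval φ = (Lvl.const p₂).eval φ
      rw [eval_const, eval_const, hp12]
    · have hp : p₂ ≤ p₁ := hs1 hL1
      exact ⟨_, exists_unifier p₁ p₂ L₁ L₂ h1 h3 hsame p₁ le_rfl hp
        (fun _ => rfl) (fun h => absurd h hL2)⟩
    · have hp : p₁ ≤ p₂ := hs2 hL2
      exact ⟨_, exists_unifier p₁ p₂ L₁ L₂ h1 h3 hsame p₂ hp le_rfl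
        (fun h => absurd h hL1) (fun _ => rfl)⟩
    · exact ⟨_, exists_unifier p₁ p₂ L₁ L₂ h1 h3 hsame (Nat.max p₁ p₂)
        (Nat.le_max_left _ _) (Nat.le_max_right _ _)
        (fun h => absurd h hL1) (fun h => absurd h hL2)⟩
  · rintro (⟨hL, hp⟩ | ⟨hL, hp⟩) ⟨θ, hθ⟩
    · subst hL
      have h := hθ id
      rw [eval_subst_build, eval_subst_build] at h
      simp only [valAux, List.foldr_nil] at h
      have h2 := le_valAux (fun i => (θ i).eval id) p₂ L₂
      simp only [valAux] at h2
      omega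
    · subst hL
      have h := hθ id
      rw [eval_subst_build, eval_subst_build] at h
      simp only [valAux, List.foldr_nil] at h
      have h2 := le_valAux (fun i => (θ i).eval id) p₁ L₁
      simp only [valAux] at h2
      omega
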